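/- arXiv:1710.10855 — 2 statements merged into one kernel-verified Lean document; each statement's English description precedes it below -/
import Mathlib

section
/- For every homeomorphism f : [0,1] → [0,1], the height of the cyclic transformation group generated by f is infinite: h(⟨f⟩,[0,1]) = +∞, i.e., the collection of orbit closures {closure({f^n(x) : n ∈ ℤ}) : x ∈ [0,1]} is infinite. -/
open Set Topology unitInterval

noncomputable section

/-- Group structure on self-homeomorphisms (composition). -/
instance homeoGroup {X : Type*} [TopologicalSpace X] : Group (X ≃ₜ X) where
  mul f g := g.trans f
  one := Homeomorph.refl X
  inv := Homeomorph.symm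
  mul_assoc _ _ _ := Homeomorph.ext fun _ => rfl
  one_mul _ := Homeomorph.ext fun _ => rfl
  mul_one _ := Homeomorph.ext fun _ => rfl
  inv_mul_cancel f := Homeomorph.ext fun x => f.symm_apply_apply x

/-- A set is invariant under a group of homeomorphisms. -/
def InvariantUnder {X : Type*} [TopologicalSpace X] (G : Subgroup (X ≃ₜ X)) (Y : Set X) : Prop :=
  ∀ g ∈ G, ∀ y ∈ Y, g y ∈ Y

/-- Lengths of strictly increasing chains of nonempty closed invariant sets ending at `univ`. -/
def heightSet {X : Type*} [TopologicalSpace X] (G : Subgroup (X ≃ₜ X)) : Set ℕ :=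
  {n | ∃ Y : Fin (n + 1) → Set X,
    StrictMono Y ∧ (∀ i, (Y i).Nonempty ∧ IsClosed (Y i) ∧ InvariantUnder G (Y i)) ∧
    Y (Fin.last n) = Set.univ}

/-- The height of a transformation group. -/
def height {X : Type*} [TopologicalSpace X] (G : Subgroup (X ≃ₜ X)) : ℕ∞ :=
  sSup ((fun n : ℕ => (n : ℕ∞)) '' heightSet G)

/-- The set of achievable heights on phase space `X`. -/
def PH (X : Type*) [TopologicalSpace X] : Set ℕ∞ :=
  {h | ∃ G : Subgroup (X ≃ₜ X), height G = h}

end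

/-! ### Auxiliary lemmas -/

/-- The closure of the range of a strictly monotone `ℤ`-indexed sequence of reals is countable:
it is contained in the range together with at most one upper accumulation point and at most
one lower accumulation point. -/
lemma countable_closure_range_int {s : ℤ → ℝ} (hs : StrictMono s) :
    (closure (Set.range s)).Countable := by
  classical
  set S := Set.range s with hS
  have hUB : (closure S ∩ upperBounds S).Subsingleton := by
    intro a ha b hb
    have h1 : closure S ⊆ Iic b := closure_minimal (fun w hw => hb.2 hw) isClosed_Iic
    have h2 : closure S ⊆ Iic a := closure_minimal (fun w hw => ha.2 hw) isClosed_Iic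
    exact le_antisymm (h1 ha.1) (h2 hb.1)
  have hLB : (closure S ∩ lowerBounds S).Subsingleton := by
    intro a ha b hb
    have h1 : closure S ⊆ Ici b := closure_minimal (fun w hw => hb.2 hw) isClosed_Ici
    have h2 : closure S ⊆ Ici a := closure_minimal (fun w hw => ha.2 hw) isClosed_Ici
    exact le_antisymm (h2 hb.1) (h1 ha.1)
  have hsub : closure S ⊆ S ∪ (closure S ∩ upperBounds S) ∪ (closure S ∩ lowerBounds S) := by
    intro z hz
    by_cases hu : z ∈ upperBounds S
    · exact Or.inl (Or.inr ⟨hz, hu⟩)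
    by_cases hl : z ∈ lowerBounds S
    · exact Or.inr ⟨hz, hl⟩
    left; left
    obtain ⟨u, ⟨n, rfl⟩, hzu⟩ : ∃ u ∈ S, ¬ u ≤ z := by
      simpa [upperBounds] using hu
    obtain ⟨l, ⟨m, rfl⟩, hlz⟩ : ∃ l ∈ S, ¬ z ≤ l := by
      simpa [lowerBounds] using hl
    push_neg at hzu hlz
    have hfin : (S ∩ Ioo (s m) (s n)).Finite := by
      have : S ∩ Ioo (s m) (s n) ⊆ s '' (Icc m n) := by
        rintro w ⟨⟨k, rfl⟩, hk1, hk2⟩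
        exact ⟨k, ⟨(hs.lt_iff_lt.mp hk1).le, (hs.lt_iff_lt.mp hk2).le⟩, rfl⟩
      exact ((Set.finite_Icc m n).image s).subset this
    have hcl : closure S ⊆ (S ∩ Ioo (s m) (s n)) ∪ (Iic (s m) ∪ Ici (s n)) := by
      apply closure_minimal
      · intro w hw
        by_cases hw' : w ∈ Ioo (s m) (s n)
        · exact Or.inl ⟨hw, hw'⟩
        · right
          rcases not_and_or.mp hw' with h | h
          · exact Or.inl (le_of_not_gt h)
          · exact Or.inr (le_of_not_gt h)
      · exact hfin.isClosed.union (isClosed_Iic.union isClosed_Ici)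
    rcases hcl hz with h1 | h2
    · exact h1.1
    · rcases h2 with h | h
      · exact absurd hlz (not_lt.mpr h)
      · exact absurd hzu (not_lt.mpr h)
  exact (((Set.countable_range s).union hUB.countable).union hLB.countable).mono hsub

/-- Transfer of the previous lemma to the unit interval. -/
lemma countable_closure_range_int_I {s : ℤ → I} (hs : StrictMono s) :
    (closure (Set.range s)).Countable := by
  have hs' : StrictMono (fun k => (s k : ℝ)) := fun a b h => Subtype.coe_lt_coe.mpr (hs h)
  have key := countable_closure_range_int hs'
  have himg : Subtype.val '' closure (Set.range s) ⊆ closure (Set.range fun k => (s k : ℝ)) := by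
    have := image_closure_subset_closure_image (s := Set.range s) continuous_subtype_val
    rwa [← Set.range_comp] at this
  exact countable_of_injective_of_countable_image
    (Set.injOn_of_injective Subtype.coe_injective) (key.mono himg)

/-- Any self-homeomorphism of the unit interval is strictly monotone or strictly antitone. -/
lemma unit_homeo_mono (f : I ≃ₜ I) : StrictMono ⇑f ∨ StrictAnti ⇑f := by
  set F : ℝ → ℝ := fun t => ((f (Set.projIcc 0 1 zero_le_one t) : ℝ)) with hF
  have hFc : Continuous F := continuous_subtype_val.comp (f.continuous.comp continuous_projIcc)
  have hFval : ∀ x : I, F (x : ℝ) = (f x : ℝ) := by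
    intro x
    simp only [hF]
    congr 1
    congr 1
    exact Set.projIcc_val zero_le_one x
  have hinj : Set.InjOn F (Set.Icc 0 1) := by
    intro a ha b hb hab
    have : F ((⟨a, ha⟩ : I) : ℝ) = F ((⟨b, hb⟩ : I) : ℝ) := hab
    rw [hFval, hFval] at this
    have := f.injective (Subtype.coe_injective this)
    exact congrArg Subtype.val this
  rcases ContinuousOn.strictMonoOn_of_injOn_Icc' zero_le_one hFc.continuousOn hinj with h | h
  · left
    intro x y hxy
    have := h x.2 y.2 (Subtype.coe_lt_coe.mpr hxy)
    rw [hFval, hFval] at this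
    exact Subtype.coe_lt_coe.mp this
  · right
    intro x y hxy
    have := h x.2 y.2 (Subtype.coe_lt_coe.mpr hxy)
    rw [hFval, hFval] at this
    exact Subtype.coe_lt_coe.mp this

section Helpers

variable {X : Type*} [TopologicalSpace X]

lemma homeo_zpow_add (f : X ≃ₜ X) (m n : ℤ) (x : X) :
    (f ^ (m + n)) x = (f ^ m) ((f ^ n) x) := by
  rw [zpow_add]; rfl

end Helpers

/-- The inverse of a strictly monotone homeomorphism of `I` is strictly monotone. -/
lemma strictMono_symm {f : I ≃ₜ I} (hf : StrictMono ⇑f) : StrictMono ⇑f.symm := by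
  intro a b hab
  rcases lt_trichotomy (f.symm a) (f.symm b) with h | h | h
  · exact h
  · exact absurd (congrArg f h) (by simp only [Homeomorph.apply_symm_apply]; exact hab.ne)
  · have := hf h
    simp only [Homeomorph.apply_symm_apply] at this
    exact absurd this (not_lt.mpr hab.le)

/-- Every integer power of a strictly monotone homeomorphism of `I` is strictly monotone. -/
lemma strictMono_zpow {g : I ≃ₜ I} (hg : StrictMono ⇑g) (k : ℤ) : StrictMono ⇑(g ^ k) := by
  induction k using Int.induction_on with
  | zero => intro a b h; rw [zpow_zero]; exact h
  | succ k ih =>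
      intro a b h
      have e : ∀ x : I, (g ^ ((k : ℤ) + 1)) x = (g ^ (k : ℤ)) (g x) := by
        intro x; rw [zpow_add, zpow_one]; rfl
      rw [e, e]; exact ih (hg h)
  | pred k ih =>
      intro a b h
      have e : ∀ x : I, (g ^ (-(k : ℤ) - 1)) x = (g ^ (-(k : ℤ))) (g.symm x) := by
        intro x; rw [sub_eq_add_neg, zpow_add, zpow_neg_one]; rfl
      rw [e, e]; exact ih (strictMono_symm hg h)

/-- The closure of a `ℤ`-orbit of a strictly monotone homeomorphism of `I` is countable. -/
lemma countable_closure_orbit {g : I ≃ₜ I} (hg : StrictMono ⇑g) (y : I) :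
    (closure (Set.range fun k : ℤ => (g ^ k) y)).Countable := by
  set s : ℤ → I := fun k : ℤ => (g ^ k) y with hs
  have hstep : ∀ k : ℤ, s (k + 1) = (g ^ k) (g y) := by
    intro k; simp only [hs]; rw [zpow_add, zpow_one]; rfl
  rcases lt_trichotomy (g y) y with hlt | heq | hgt
  · -- strictly decreasing orbit
    have hdec : ∀ k : ℤ, s (k + 1) < s k := fun k => by
      rw [hstep k]; exact strictMono_zpow hg k hlt
    have hmono : StrictMono (fun k : ℤ => s (-k)) := by
      apply strictMono_int_of_lt_succ
      intro k
      have := hdec (-(k + 1))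
      have e : -(k + 1) + 1 = -k := by ring
      rwa [e] at this
    have hrange : (Set.range fun k : ℤ => s (-k)) = Set.range s := by
      ext z; constructor
      · rintro ⟨k, rfl⟩; exact ⟨-k, rfl⟩
      · rintro ⟨k, rfl⟩; exact ⟨-k, by simp⟩
    have := countable_closure_range_int_I hmono
    rwa [hrange] at this
  · -- fixed point
    have hfix : ∀ k : ℤ, s k = y := by
      intro k
      induction k using Int.induction_on with
      | zero => simp only [hs]; rw [zpow_zero]; rfl
      | succ k ih => rw [hstep k, heq]; exact ih
      | pred k ih =>
          have e : s (-(k : ℤ) - 1) = (g ^ (-(k : ℤ))) (g.symm y) := by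
            simp only [hs]; rw [sub_eq_add_neg, zpow_add, zpow_neg_one]; rfl
          have hsymm : g.symm y = y := by
            conv_lhs => rw [← heq]
            exact g.symm_apply_apply y
          rw [e, hsymm]; exact ih
    have hsub : Set.range s ⊆ {y} := by rintro z ⟨k, rfl⟩; exact hfix k
    have : closure (Set.range s) ⊆ {y} := closure_minimal hsub isClosed_singleton
    exact (Set.countable_singleton y).mono this
  · -- strictly increasing orbit
    have hmono : StrictMono s := by
      apply strictMono_int_of_lt_succ
      intro k
      rw [hstep k]; exact strictMono_zpow hg k hgt
    exact countable_closure_range_int_I hmono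

/-- The closure of any full orbit of a homeomorphism of `I` is countable. -/
lemma countable_orbit_closure (f : I ≃ₜ I) (x : I) :
    (closure (Set.range fun n : ℤ => (f ^ n) x)).Countable := by
  -- the square of `f` is strictly monotone
  have hg : StrictMono ⇑(f * f) := by
    have : ∀ z : I, (f * f) z = f (f z) := fun z => rfl
    rcases unit_homeo_mono f with h | h
    · intro a b hab; rw [this, this]; exact h (h hab)
    · intro a b hab; rw [this, this]; exact h (h hab)
  -- orbit splits into the `f²`-orbits of `x` and of `f x`
  have hsplit : (Set.range fun n : ℤ => (f ^ n) x) ⊆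
      (Set.range fun k : ℤ => ((f * f) ^ k) x) ∪
      (Set.range fun k : ℤ => ((f * f) ^ k) (f x)) := by
    have hpow : ∀ k : ℤ, ((f * f) ^ k : I ≃ₜ I) = f ^ (2 * k) := by
      intro k
      rw [zpow_mul, zpow_two]
    rintro z ⟨n, rfl⟩
    rcases Int.even_or_odd n with ⟨k, hk⟩ | ⟨k, hk⟩
    · left
      refine ⟨k, ?_⟩
      show ((f * f) ^ k) x = (f ^ n) x
      rw [hpow k]
      congr 2
      rw [hk, two_mul]
    · right
      refine ⟨k, ?_⟩
      show ((f * f) ^ k) (f x) = (f ^ n) x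
      rw [hpow k, hk, homeo_zpow_add f (2 * k) 1 x, zpow_one]
  have h1 := countable_closure_orbit hg x
  have h2 := countable_closure_orbit hg (f x)
  have : closure (Set.range fun n : ℤ => (f ^ n) x) ⊆
      closure (Set.range fun k : ℤ => ((f * f) ^ k) x) ∪
      closure (Set.range fun k : ℤ => ((f * f) ^ k) (f x)) := by
    rw [← closure_union]
    exact closure_mono hsplit
  exact (h1.union h2).mono this

/-- Orbit closures are invariant under the cyclic group. -/
lemma orbit_closure_invariant (f : I ≃ₜ I) (x : I) :
    InvariantUnder (Subgroup.zpowers f) (closure (Set.range fun n : ℤ => (f ^ n) x)) := by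
  intro h hh y hy
  obtain ⟨m, rfl⟩ := Subgroup.mem_zpowers_iff.mp hh
  have hmap : Set.MapsTo ⇑(f ^ m) (Set.range fun n : ℤ => (f ^ n) x)
      (Set.range fun n : ℤ => (f ^ n) x) := by
    rintro z ⟨n, rfl⟩
    exact ⟨m + n, homeo_zpow_add f m n x⟩
  exact (hmap.closure (f ^ m).continuous) hy

/-- `I` is uncountable (as a set). -/
lemma not_countable_univ_I : ¬ (Set.univ : Set I).Countable := by
  intro h
  have h1 : Countable I := Set.countable_univ_iff.mp h
  have h2 : (Set.Icc (0 : ℝ) 1).Countable := Set.countable_coe_iff.mp h1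
  have h3 := h2.le_aleph0
  rw [Cardinal.mk_Icc_real zero_lt_one] at h3
  exact Cardinal.aleph0_lt_continuum.not_ge h3

/-- For every homeomorphism `f` of `[0,1]`, the cyclic transformation group `⟨f⟩` has
infinitely many orbit closures and infinite height. -/
theorem cyclic_height_unitInterval_top (f : I ≃ₜ I) :
    {S : Set I | ∃ x : I, S = closure (Set.range fun n : ℤ => (f ^ n) x)}.Infinite ∧
    height (Subgroup.zpowers f) = ⊤ := by
  classical
  set C : I → Set I := fun x => closure (Set.range fun n : ℤ => (f ^ n) x) with hC
  have hCmem : ∀ x : I, x ∈ C x := by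
    intro x
    apply subset_closure
    exact ⟨0, by show (f ^ (0 : ℤ)) x = x; rw [zpow_zero]; rfl⟩
  have hCcount : ∀ x : I, (C x).Countable := fun x => countable_orbit_closure f x
  have hCclosed : ∀ x : I, IsClosed (C x) := fun x => isClosed_closure
  have hCinv : ∀ x : I, InvariantUnder (Subgroup.zpowers f) (C x) :=
    fun x => orbit_closure_invariant f x
  -- a choice function avoiding countable sets
  have hpick_ex : ∀ s : Set I, s.Countable → ∃ p : I, p ∉ s := by
    intro s hs
    by_contra h
    push_neg at h
    exact not_countable_univ_I (hs.mono (fun p _ => h p))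
  set pick : Set I → I := fun s => if h : ∃ p : I, p ∉ s then h.choose else 0 with hpickdef
  have hpick : ∀ s : Set I, s.Countable → pick s ∉ s := by
    intro s hs
    have hex := hpick_ex s hs
    simp only [hpickdef, dif_pos hex]
    exact hex.choose_spec
  -- the increasing chain of unions of orbit closures
  set U : ℕ → Set I := fun k => Nat.rec ∅ (fun _ s => s ∪ C (pick s)) k with hU
  have hUsucc : ∀ k, U (k + 1) = U k ∪ C (pick (U k)) := fun k => rfl
  have hUcount : ∀ k, (U k).Countable := by
    intro k
    induction k with
    | zero => exact Set.countable_empty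
    | succ k ih => rw [hUsucc]; exact ih.union (hCcount _)
  have hUclosed : ∀ k, IsClosed (U k) := by
    intro k
    induction k with
    | zero => exact isClosed_empty
    | succ k ih => rw [hUsucc]; exact ih.union (hCclosed _)
  have hUinv : ∀ k, InvariantUnder (Subgroup.zpowers f) (U k) := by
    intro k
    induction k with
    | zero => intro g hg y hy; exact absurd hy (Set.notMem_empty y)
    | succ k ih =>
        intro g hg y hy
        rw [hUsucc] at hy ⊢
        rcases hy with hy | hy
        · exact Or.inl (ih g hg y hy)
        · exact Or.inr (hCinv _ g hg y hy)
  have hUmono : Monotone U := monotone_nat_of_le_succ (fun k => by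
    rw [hUsucc]; exact Set.subset_union_left)
  have hUpick_notmem : ∀ k, pick (U k) ∉ U k := fun k => hpick _ (hUcount k)
  have hUpick_mem : ∀ k, pick (U k) ∈ U (k + 1) := by
    intro k
    rw [hUsucc]
    exact Or.inr (hCmem _)
  constructor
  · -- infinitely many orbit closures
    intro hfin
    apply not_countable_univ_I
    have hcover : (Set.univ : Set I) ⊆ ⋃₀ {S : Set I | ∃ x : I, S = C x} :=
      fun x _ => ⟨C x, ⟨x, rfl⟩, hCmem x⟩
    have hcnt : (⋃₀ {S : Set I | ∃ x : I, S = C x}).Countable := by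
      apply hfin.countable.sUnion
      rintro t ⟨x, rfl⟩
      exact hCcount x
    exact hcnt.mono hcover
  · -- height is infinite
    have hall : ∀ n : ℕ, n ∈ heightSet (Subgroup.zpowers f) := by
      intro n
      refine ⟨fun i => if i = Fin.last n then Set.univ else U ((i : ℕ) + 1), ?_, ?_, ?_⟩
      · intro i j hij
        by_cases hj : j = Fin.last n
        · subst hj
          have hi : i ≠ Fin.last n := ne_of_lt hij
          show (if i = Fin.last n then Set.univ else U ((i : ℕ) + 1)) <
            (if Fin.last n = Fin.last n then Set.univ else U (((Fin.last n : Fin (n+1)) : ℕ) + 1))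
          rw [if_neg hi, if_pos rfl, Set.lt_iff_ssubset, Set.ssubset_univ_iff]
          intro hEq
          exact hUpick_notmem ((i : ℕ) + 1) (hEq ▸ Set.mem_univ _)
        · have hi : i ≠ Fin.last n := by
            intro h
            exact hj (le_antisymm (Fin.le_last j) (h ▸ hij.le))
          show (if i = Fin.last n then Set.univ else U ((i : ℕ) + 1)) <
            (if j = Fin.last n then Set.univ else U ((j : ℕ) + 1))
          rw [if_neg hi, if_neg hj, Set.lt_iff_ssubset]
          have hij' : (i : ℕ) + 1 ≤ (j : ℕ) := hij
          rw [Set.ssubset_def]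
          constructor
          · exact (hUmono hij').trans (hUmono (Nat.le_succ _))
          · intro hcontra
            exact hUpick_notmem (j : ℕ)
              (hUmono hij' (hcontra (hUpick_mem (j : ℕ))))
      · intro i
        by_cases hi : i = Fin.last n
        · simp only [if_pos hi]
          exact ⟨Set.univ_nonempty, isClosed_univ, fun g _ y _ => Set.mem_univ _⟩
        · simp only [if_neg hi]
          exact ⟨⟨pick (U (i : ℕ)), hUpick_mem (i : ℕ)⟩, hUclosed ((i : ℕ) + 1),
            hUinv ((i : ℕ) + 1)⟩
      · simp
    rw [height]
    rw [sSup_eq_top]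
    intro b hb
    lift b to ℕ using hb.ne
    exact ⟨((b + 1 : ℕ) : ℕ∞), ⟨b + 1, hall (b + 1), rfl⟩, by exact_mod_cast Nat.lt_succ_self b⟩
end

section
/- Let X be a topological graph (a compact connected metric space that is a finite union of arcs meeting only at endpoints). Then h(Homeo(X),X) < +∞. Quantitatively, if X is not a circle and V and E denote its sets of vertices and edges, then every orbit closure of the Homeo(X)-action is a union of vertices or a union of closed edges, so the number of orbit closures is at most 2^{|V|} + 2^{|E|} − 2, giving h(Homeo(X),X) ≤ 2^{|V|} + 2^{|E|} − 3. -/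
open Set Topology unitInterval

noncomputable section

/-- A presentation of a topological graph: a finite union of arcs, any two of which
meet in at most their endpoints. -/
structure GraphStruct (X : Type*) [TopologicalSpace X] where
  numEdges : ℕ
  edge : Fin numEdges → unitInterval → X
  cont : ∀ i, Continuous (edge i)
  inj : ∀ i, Function.Injective (edge i)
  cover : ∀ x : X, ∃ i t, edge i t = x
  meet : ∀ i j, i ≠ j → ∀ s t, edge i s = edge j t → (s = 0 ∨ s = 1) ∧ (t = 0 ∨ t = 1)

/-- The vertices: endpoints of the arcs. -/
def GraphStruct.vertexSet {X : Type*} [TopologicalSpace X] (G : GraphStruct X) : Set X :=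
  {v | ∃ i, G.edge i 0 = v ∨ G.edge i 1 = v}

/-- The degree of a point: the number of edge-ends at it. -/
def GraphStruct.degree {X : Type*} [TopologicalSpace X] (G : GraphStruct X) (v : X) : ℕ :=
  Set.ncard {p : Fin G.numEdges × Bool | G.edge p.1 (if p.2 then 1 else 0) = v}

/-- The (closed) edges, as subsets of `X`. -/
def GraphStruct.edgeSet {X : Type*} [TopologicalSpace X] (G : GraphStruct X) : Set (Set X) :=
  Set.range fun i => Set.range (G.edge i)

end


noncomputable section

set_option linter.unusedSectionVars false
namespace GraphAux

/-- The orbit of a point under the full homeomorphism group. -/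
def horbit {X : Type*} [TopologicalSpace X] (x : X) : Set X := {y | ∃ f : X ≃ₜ X, f x = y}

variable {X : Type*} [MetricSpace X] [CompactSpace X] (G : GraphStruct X)

/-- An edge as a homeomorphism onto its image. -/
def edgeHomeo (i : Fin G.numEdges) : unitInterval ≃ₜ Set.range (G.edge i) :=
  Continuous.homeoOfEquivCompactToT2 (f := Equiv.ofInjective _ (G.inj i))
    ((G.cont i).subtype_mk _)

lemma edgeHomeo_apply (i : Fin G.numEdges) (s : unitInterval) :
    (edgeHomeo G i s : X) = G.edge i s := rfl

lemma edgeHomeo_symm (i : Fin G.numEdges) (s : unitInterval) (h : G.edge i s ∈ range (G.edge i)) :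
    (edgeHomeo G i).symm ⟨G.edge i s, h⟩ = s := by
  have h1 : (⟨G.edge i s, h⟩ : range (G.edge i)) = edgeHomeo G i s := rfl
  rw [h1, Homeomorph.symm_apply_apply]

open Classical in
/-- Push function: act by `φ` inside edge `i`, identity outside. -/
def pushFun (i : Fin G.numEdges) (φ : unitInterval ≃ₜ unitInterval) : X → X :=
  fun x => if h : x ∈ Set.range (G.edge i)
    then ((edgeHomeo G i) (φ ((edgeHomeo G i).symm ⟨x, h⟩)) : X) else x

lemma pushFun_edge (i : Fin G.numEdges) (φ : unitInterval ≃ₜ unitInterval) (s : unitInterval) :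
    pushFun G i φ (G.edge i s) = G.edge i (φ s) := by
  have h : G.edge i s ∈ Set.range (G.edge i) := mem_range_self s
  rw [pushFun, dif_pos h, edgeHomeo_symm]
  rfl

lemma pushFun_not_mem (i : Fin G.numEdges) (φ : unitInterval ≃ₜ unitInterval) {x : X}
    (h : x ∉ Set.range (G.edge i)) : pushFun G i φ x = x := dif_neg h

lemma pushFun_continuous (i : Fin G.numEdges) (φ : unitInterval ≃ₜ unitInterval)
    (h0 : φ 0 = 0) (h1 : φ 1 = 1) : Continuous (pushFun G i φ) := by
  classical
  set C : Set X := (⋃ j : {j : Fin G.numEdges // j ≠ i}, Set.range (G.edge j.1)) ∪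
      {G.edge i 0, G.edge i 1} with hC
  have hCclosed : IsClosed C := by
    apply IsClosed.union
    · exact isClosed_iUnion_of_finite fun j => (isCompact_range (G.cont _)).isClosed
    · exact (Set.finite_singleton _ |>.insert _).isClosed
  have heq : Set.EqOn (pushFun G i φ) id C := by
    intro x hx
    rcases hx with hx | hx
    · simp only [Set.mem_iUnion] at hx
      obtain ⟨⟨j, hj⟩, t, ht⟩ := hx
      by_cases hxr : x ∈ Set.range (G.edge i)
      · obtain ⟨s, hs⟩ := hxr
        have hm := (G.meet i j (Ne.symm hj) s t (by rw [hs, ht])).1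
        subst hs
        rcases hm with rfl | rfl
        · simp [pushFun_edge, h0]
        · simp [pushFun_edge, h1]
      · simp [pushFun_not_mem G i φ hxr]
    · rcases hx with rfl | hx
      · simp [pushFun_edge, h0]
      · rcases hx with rfl
        simp [pushFun_edge, h1]
  have hcov : (⋃ b : Bool, if b then Set.range (G.edge i) else C) = Set.univ := by
    apply Set.eq_univ_of_forall
    intro x
    obtain ⟨j, t, ht⟩ := G.cover x
    by_cases hj : j = i
    · subst hj
      exact Set.mem_iUnion.2 ⟨true, by simp [← ht]⟩
    · refine Set.mem_iUnion.2 ⟨false, ?_⟩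
      rw [if_neg Bool.false_ne_true]
      exact Or.inl (Set.mem_iUnion.2 ⟨⟨j, hj⟩, t, ht⟩)
  apply (locallyFinite_of_finite (fun b : Bool => if b then Set.range (G.edge i) else C)).continuous
    hcov
  · rintro (_ | _)
    · rw [if_neg Bool.false_ne_true]; exact hCclosed
    · rw [if_pos rfl]; exact (isCompact_range (G.cont i)).isClosed
  · rintro (_ | _)
    · rw [if_neg Bool.false_ne_true]
      exact (continuous_id.continuousOn).congr heq
    · rw [if_pos rfl]
      rw [continuousOn_iff_continuous_restrict]
      have : Set.domRestrict (Set.range (G.edge i)) (pushFun G i φ) =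
          fun y : Set.range (G.edge i) =>
            ((edgeHomeo G i) (φ ((edgeHomeo G i).symm y)) : X) := by
        funext y
        simp only [Set.domRestrict_apply, pushFun, dif_pos y.2]
      rw [this]
      exact continuous_subtype_val.comp ((edgeHomeo G i).continuous.comp
        (φ.continuous.comp (edgeHomeo G i).symm.continuous))

/-- The push homeomorphism. -/
def pushHomeo (i : Fin G.numEdges) (φ : unitInterval ≃ₜ unitInterval)
    (h0 : φ 0 = 0) (h1 : φ 1 = 1) : X ≃ₜ X where
  toFun := pushFun G i φ
  invFun := pushFun G i φ.symm
  left_inv := by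
    intro x
    by_cases h : x ∈ Set.range (G.edge i)
    · obtain ⟨s, rfl⟩ := h
      rw [pushFun_edge, pushFun_edge, Homeomorph.symm_apply_apply]
    · rw [pushFun_not_mem G i φ h, pushFun_not_mem G i φ.symm h]
  right_inv := by
    intro x
    by_cases h : x ∈ Set.range (G.edge i)
    · obtain ⟨s, rfl⟩ := h
      rw [pushFun_edge, pushFun_edge, Homeomorph.apply_symm_apply]
    · rw [pushFun_not_mem G i φ.symm h, pushFun_not_mem G i φ h]
  continuous_toFun := pushFun_continuous G i φ h0 h1
  continuous_invFun := by
    apply pushFun_continuous G i φ.symm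
    · exact φ.injective (by rw [Homeomorph.apply_symm_apply, h0])
    · exact φ.injective (by rw [Homeomorph.apply_symm_apply, h1])

/-- The rpow homeomorphism of the unit interval. -/
def powI (c : ℝ) (hc : 0 < c) : unitInterval ≃ₜ unitInterval :=
  { toFun := fun u => ⟨u.1 ^ c, Real.rpow_nonneg u.2.1 c,
      Real.rpow_le_one u.2.1 u.2.2 hc.le⟩
    invFun := fun u => ⟨u.1 ^ c⁻¹, Real.rpow_nonneg u.2.1 _,
      Real.rpow_le_one u.2.1 u.2.2 (by positivity)⟩
    left_inv := fun u => by
      ext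
      simp only
      rw [← Real.rpow_mul u.2.1, mul_inv_cancel₀ hc.ne', Real.rpow_one]
    right_inv := fun u => by
      ext
      simp only
      rw [← Real.rpow_mul u.2.1, inv_mul_cancel₀ hc.ne', Real.rpow_one]
    continuous_toFun := by
      apply Continuous.subtype_mk
      exact (Real.continuous_rpow_const hc.le).comp continuous_subtype_val
    continuous_invFun := by
      apply Continuous.subtype_mk
      exact (Real.continuous_rpow_const (by positivity)).comp continuous_subtype_val }

@[simp] lemma powI_coe (c : ℝ) (hc : 0 < c) (u : unitInterval) :
    ((powI c hc u : unitInterval) : ℝ) = (u : ℝ) ^ c := rfl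

lemma powI_zero (c : ℝ) (hc : 0 < c) : powI c hc 0 = 0 := by
  ext; simp [powI, Real.zero_rpow hc.ne']

lemma powI_one (c : ℝ) (hc : 0 < c) : powI c hc 1 = 1 := by
  ext; simp [powI]

/-- Given interior points `s t`, a homeo of `I` fixing `0,1` sending `s` to `t`. -/
lemma exists_powI (s t : unitInterval) (hs0 : (s:ℝ) ≠ 0) (hs1 : (s:ℝ) ≠ 1)
    (ht0 : (t:ℝ) ≠ 0) (ht1 : (t:ℝ) ≠ 1) :
    ∃ φ : unitInterval ≃ₜ unitInterval, φ 0 = 0 ∧ φ 1 = 1 ∧ φ s = t := by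
  have hs0' : (0:ℝ) < s := lt_of_le_of_ne s.2.1 (Ne.symm hs0)
  have hs1' : (s:ℝ) < 1 := lt_of_le_of_ne s.2.2 hs1
  have ht0' : (0:ℝ) < t := lt_of_le_of_ne t.2.1 (Ne.symm ht0)
  have ht1' : (t:ℝ) < 1 := lt_of_le_of_ne t.2.2 ht1
  have hls : Real.log s < 0 := Real.log_neg hs0' hs1'
  have hlt : Real.log t < 0 := Real.log_neg ht0' ht1'
  have hc : 0 < Real.log t / Real.log s := div_pos_of_neg_of_neg hlt hls
  refine ⟨powI _ hc, powI_zero _ hc, powI_one _ hc, ?_⟩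
  ext
  rw [powI_coe, Real.rpow_def_of_pos hs0', mul_div_cancel₀ _ hls.ne, Real.exp_log ht0']

lemma mem_horbit_self (x : X) : x ∈ horbit x := ⟨Homeomorph.refl X, rfl⟩

lemma horbit_eq_of_mem {x y : X} (h : y ∈ horbit x) : horbit y = horbit x := by
  obtain ⟨f, rfl⟩ := h
  ext z
  constructor
  · rintro ⟨g, rfl⟩
    exact ⟨f.trans g, rfl⟩
  · rintro ⟨g, rfl⟩
    exact ⟨f.symm.trans g, by simp⟩

lemma closure_horbit_inv {x : X} (f : X ≃ₜ X) {z : X} (h : z ∈ closure (horbit x)) :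
    f z ∈ closure (horbit x) := by
  have h1 : f '' horbit x ⊆ horbit x := by
    rintro _ ⟨_, ⟨g, rfl⟩, rfl⟩
    exact ⟨g.trans f, rfl⟩
  have h2 : f '' closure (horbit x) ⊆ closure (horbit x) := by
    rw [f.image_closure]
    exact closure_mono h1
  exact h2 ⟨z, h, rfl⟩

/-- A closed set invariant under all homeomorphisms containing one interior point of
an edge contains the whole closed edge. -/
lemma edge_subset_of_closed_inv (S : Set X) (hScl : IsClosed S)
    (hinv : ∀ f : X ≃ₜ X, ∀ z ∈ S, f z ∈ S) {i : Fin G.numEdges} {s : unitInterval}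
    (hs0 : (s:ℝ) ≠ 0) (hs1 : (s:ℝ) ≠ 1) (hmem : G.edge i s ∈ S) :
    Set.range (G.edge i) ⊆ S := by
  have hint : ∀ t : unitInterval, (t:ℝ) ≠ 0 → (t:ℝ) ≠ 1 → G.edge i t ∈ S := by
    intro t ht0 ht1
    obtain ⟨φ, h0, h1, hst⟩ := exists_powI s t hs0 hs1 ht0 ht1
    have hh := hinv (pushHomeo G i φ h0 h1) _ hmem
    have he : (pushHomeo G i φ h0 h1) (G.edge i s) = G.edge i t := by
      show pushFun G i φ (G.edge i s) = G.edge i t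
      rw [pushFun_edge, hst]
    rwa [he] at hh
  set g : ℝ → X := fun u => G.edge i (Set.projIcc 0 1 zero_le_one u) with hg
  have hgc : Continuous g := (G.cont i).comp continuous_projIcc
  have h2 : Set.range (G.edge i) ⊆ closure (g '' Set.Ioo 0 1) := by
    rintro _ ⟨u, rfl⟩
    have he : G.edge i u = g (u : ℝ) := by
      rw [hg]
      simp only
      rw [Set.projIcc_val]
    rw [he]
    have hu : (u:ℝ) ∈ closure (Set.Ioo (0:ℝ) 1) := by
      rw [closure_Ioo one_ne_zero.symm]
      exact u.2
    exact (image_closure_subset_closure_image hgc) ⟨u, hu, rfl⟩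
  have h3 : g '' Set.Ioo 0 1 ⊆ S := by
    rintro _ ⟨u, hu, rfl⟩
    have he : Set.projIcc (0:ℝ) 1 zero_le_one u = ⟨u, hu.1.le, hu.2.le⟩ :=
      Set.projIcc_of_mem zero_le_one ⟨hu.1.le, hu.2.le⟩
    show G.edge i _ ∈ S
    rw [he]
    exact hint _ hu.1.ne' hu.2.ne
  intro x hx
  rw [← hScl.closure_eq]
  exact closure_mono h3 (h2 hx)

lemma vertex_or_interior (x : X) : x ∈ G.vertexSet ∨
    ∃ (i : Fin G.numEdges) (s : unitInterval), (s:ℝ) ≠ 0 ∧ (s:ℝ) ≠ 1 ∧ G.edge i s = x := by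
  obtain ⟨i, s, rfl⟩ := G.cover x
  by_cases h0 : (s:ℝ) = 0
  · left
    exact ⟨i, Or.inl (by rw [show (0:unitInterval) = s from (Subtype.ext h0).symm])⟩
  by_cases h1 : (s:ℝ) = 1
  · left
    exact ⟨i, Or.inr (by rw [show (1:unitInterval) = s from (Subtype.ext h1).symm])⟩
  · exact Or.inr ⟨i, s, h0, h1, rfl⟩

/-- The open part of an edge. -/
def edgeInt (i : Fin G.numEdges) : Set X :=
  G.edge i '' {s : unitInterval | (s:ℝ) ≠ 0 ∧ (s:ℝ) ≠ 1}

lemma edgeInt_subset (i : Fin G.numEdges) : edgeInt G i ⊆ Set.range (G.edge i) := by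
  rintro _ ⟨s, _, rfl⟩; exact mem_range_self s

lemma isOpen_edgeInt (i : Fin G.numEdges) : IsOpen (edgeInt G i) := by
  have hco : edgeInt G i = ((⋃ j : {j : Fin G.numEdges // j ≠ i}, Set.range (G.edge j.1)) ∪
      {G.edge i 0, G.edge i 1})ᶜ := by
    ext x
    simp only [Set.mem_compl_iff, Set.mem_union, Set.mem_iUnion, not_or, not_exists,
      Set.mem_insert_iff, Set.mem_singleton_iff]
    constructor
    · rintro ⟨s, ⟨hs0, hs1⟩, rfl⟩
      refine ⟨fun j ht => ?_, ?_, ?_⟩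
      · obtain ⟨t, ht⟩ := ht
        rcases (G.meet i j (Ne.symm j.2) s t ht.symm).1 with rfl | rfl
        · exact hs0 rfl
        · exact hs1 rfl
      · intro h
        rcases G.inj i h with rfl
        exact hs0 rfl
      · intro h
        rcases G.inj i h with rfl
        exact hs1 rfl
    · rintro ⟨h1, h2, h3⟩
      obtain ⟨j, t, rfl⟩ := G.cover x
      by_cases hj : j = i
      · subst hj
        refine ⟨t, ⟨?_, ?_⟩, rfl⟩
        · intro h
          exact h2 (by rw [show t = (0:unitInterval) from Subtype.ext h])
        · intro h
          exact h3 (by rw [show t = (1:unitInterval) from Subtype.ext h])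
      · exact absurd ⟨t, rfl⟩ (h1 ⟨j, hj⟩)
  rw [hco]
  have hcl : IsClosed ((⋃ j : {j : Fin G.numEdges // j ≠ i}, Set.range (G.edge j.1)) ∪
      {G.edge i 0, G.edge i 1}) :=
    IsClosed.union
      (isClosed_iUnion_of_finite fun j => (isCompact_range (G.cont _)).isClosed)
      ((Set.finite_singleton _ |>.insert _).isClosed)
  exact hcl.isOpen_compl

lemma vertexSet_finite : G.vertexSet.Finite := by
  have hsub : G.vertexSet ⊆
      Set.range (fun p : Fin G.numEdges × Bool => G.edge p.1 (if p.2 then 1 else 0)) := by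
    rintro v ⟨i, h | h⟩
    · exact ⟨(i, false), by simpa using h⟩
    · exact ⟨(i, true), by simpa using h⟩
  exact (Set.finite_range _).subset hsub

lemma edgeSet_finite : G.edgeSet.Finite := Set.finite_range _

lemma exists_interior_near_endpoint (j : Fin G.numEdges) (b : unitInterval)
    (hb : (b:ℝ) = 0 ∨ (b:ℝ) = 1) {W : Set X} (hW : IsOpen W) (hbW : G.edge j b ∈ W) :
    ∃ t : unitInterval, (t:ℝ) ≠ 0 ∧ (t:ℝ) ≠ 1 ∧ G.edge j t ∈ W := by
  set g : ℝ → X := fun u => G.edge j (Set.projIcc 0 1 zero_le_one u) with hg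
  have hgc : Continuous g := (G.cont j).comp continuous_projIcc
  have hgb : g (b:ℝ) = G.edge j b := by
    rw [hg]; simp only; rw [Set.projIcc_val]
  have hne : (𝓝[Set.Ioo (0:ℝ) 1] (b:ℝ)).NeBot := by
    rcases hb with hb | hb
    · rw [hb]; exact left_nhdsWithin_Ioo_neBot zero_lt_one
    · rw [hb]; exact right_nhdsWithin_Ioo_neBot zero_lt_one
  have htend : Filter.Tendsto g (𝓝[Set.Ioo (0:ℝ) 1] (b:ℝ)) (𝓝 (G.edge j b)) := by
    rw [← hgb]
    exact (hgc.continuousAt).continuousWithinAt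
  have hev : ∀ᶠ u in 𝓝[Set.Ioo (0:ℝ) 1] (b:ℝ), g u ∈ W ∧ u ∈ Set.Ioo (0:ℝ) 1 :=
    (htend.eventually (hW.eventually_mem hbW)).and self_mem_nhdsWithin
  obtain ⟨u, hu1, hu2⟩ := hev.exists
  refine ⟨Set.projIcc 0 1 zero_le_one u, ?_, ?_, hu1⟩
  · rw [Set.projIcc_of_mem zero_le_one ⟨hu2.1.le, hu2.2.le⟩]
    exact hu2.1.ne'
  · rw [Set.projIcc_of_mem zero_le_one ⟨hu2.1.le, hu2.2.le⟩]
    exact hu2.2.ne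

theorem orbit_closure_structure (x : X) :
    (∃ V ⊆ G.vertexSet, V.Nonempty ∧ closure (horbit x) = V) ∨
    (∃ L ⊆ G.edgeSet, L.Nonempty ∧ closure (horbit x) = ⋃₀ L) := by
  by_cases hA : horbit x ⊆ G.vertexSet
  · left
    have hfin : (horbit x).Finite := (vertexSet_finite G).subset hA
    exact ⟨horbit x, hA, ⟨x, mem_horbit_self x⟩, hfin.isClosed.closure_eq⟩
  · right
    rw [Set.not_subset] at hA
    obtain ⟨y, hy, hyv⟩ := hA
    obtain ⟨i, s, hs0, hs1, hys⟩ := (vertex_or_interior G y).resolve_left hyv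
    set S := closure (horbit x) with hS
    have hScl : IsClosed S := isClosed_closure
    have hSinv : ∀ f : X ≃ₜ X, ∀ z ∈ S, f z ∈ S := fun f z hz => closure_horbit_inv f hz
    have hyS : y ∈ S := subset_closure hy
    have hrange : Set.range (G.edge i) ⊆ S :=
      edge_subset_of_closed_inv G S hScl hSinv hs0 hs1 (hys ▸ hyS)
    set L : Set (Set X) := {e ∈ G.edgeSet | e ⊆ S} with hL
    have hLsub : L ⊆ G.edgeSet := Set.sep_subset _ _
    have hLfin : L.Finite := (edgeSet_finite G).subset hLsub
    refine ⟨L, hLsub, ⟨Set.range (G.edge i), ⟨i, rfl⟩, hrange⟩, ?_⟩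
    apply subset_antisymm
    · have hLclosed : IsClosed (⋃₀ L) := by
        rw [Set.sUnion_eq_biUnion]
        apply hLfin.isClosed_biUnion
        rintro e ⟨⟨j, rfl⟩, -⟩
        exact (isCompact_range (G.cont j)).isClosed
      apply closure_minimal ?_ hLclosed
      intro z hz
      have hz' : z ∈ horbit y := by rw [horbit_eq_of_mem hy]; exact hz
      obtain ⟨g, rfl⟩ := hz'
      have hWopen : IsOpen (g '' edgeInt G i) := g.isOpenMap _ (isOpen_edgeInt G i)
      have hWS : g '' edgeInt G i ⊆ S := by
        rintro _ ⟨v, hv, rfl⟩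
        exact hSinv g v (hrange (edgeInt_subset G i hv))
      have hgyW : g y ∈ g '' edgeInt G i := ⟨y, ⟨s, ⟨hs0, hs1⟩, hys⟩, rfl⟩
      have hgyS : g y ∈ S := hSinv g y hyS
      rcases vertex_or_interior G (g y) with ⟨j, hj⟩ | ⟨j, t, ht0, ht1, hjt⟩
      · -- g y is a vertex: find an interior point of an adjacent edge inside W ⊆ S
        have hb : ∃ b : unitInterval, ((b:ℝ) = 0 ∨ (b:ℝ) = 1) ∧ G.edge j b = g y := by
          rcases hj with hj | hj
          · exact ⟨0, Or.inl rfl, hj⟩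
          · exact ⟨1, Or.inr rfl, hj⟩
        obtain ⟨b, hb01, hbj⟩ := hb
        obtain ⟨t, ht0, ht1, htW⟩ := exists_interior_near_endpoint G j b hb01 hWopen
          (hbj.symm ▸ hgyW)
        have hrj : Set.range (G.edge j) ⊆ S :=
          edge_subset_of_closed_inv G S hScl hSinv ht0 ht1 (hWS htW)
        exact ⟨Set.range (G.edge j), ⟨⟨j, rfl⟩, hrj⟩, hbj ▸ mem_range_self b⟩
      · have hrj : Set.range (G.edge j) ⊆ S :=
          edge_subset_of_closed_inv G S hScl hSinv ht0 ht1 (hjt.symm ▸ hgyS)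
        exact ⟨Set.range (G.edge j), ⟨⟨j, rfl⟩, hrj⟩, hjt ▸ mem_range_self t⟩
    · exact Set.sUnion_subset fun e he => he.2

end GraphAux

namespace GraphAux

lemma ncard_subsets_nonempty {α : Type*} {s : Set α} (hs : s.Finite) :
    {V : Set α | V ⊆ s ∧ V.Nonempty}.ncard ≤ 2 ^ s.ncard - 1 := by
  classical
  have hsub : {V : Set α | V ⊆ s ∧ V.Nonempty} ⊆
      (fun t : Finset α => (t : Set α)) '' ↑(hs.toFinset.powerset.erase ∅) := by
    rintro V ⟨hVs, hVne⟩
    have hVfin : V.Finite := hs.subset hVs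
    refine ⟨hVfin.toFinset, ?_, by simp⟩
    rw [Finset.mem_coe, Finset.mem_erase, Finset.mem_powerset]
    refine ⟨?_, ?_⟩
    · intro h
      rcases hVne with ⟨v, hv⟩
      have : v ∈ hVfin.toFinset := hVfin.mem_toFinset.2 hv
      rw [h] at this
      exact absurd this (Finset.notMem_empty v)
    · intro a ha
      exact hs.mem_toFinset.2 (hVs (hVfin.mem_toFinset.1 ha))
  calc {V : Set α | V ⊆ s ∧ V.Nonempty}.ncard
      ≤ ((fun t : Finset α => (t : Set α)) '' ↑(hs.toFinset.powerset.erase ∅)).ncard :=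
        Set.ncard_le_ncard hsub ((hs.toFinset.powerset.erase ∅).finite_toSet.image _)
    _ ≤ (↑(hs.toFinset.powerset.erase ∅) : Set (Finset α)).ncard :=
        Set.ncard_image_le (Finset.finite_toSet _)
    _ = (hs.toFinset.powerset.erase ∅).card := Set.ncard_coe_finset _
    _ = 2 ^ s.ncard - 1 := by
        rw [Finset.card_erase_of_mem (Finset.empty_mem_powerset _), Finset.card_powerset,
          Set.ncard_eq_toFinset_card s hs]

variable {X : Type*} [MetricSpace X] [CompactSpace X] (G : GraphStruct X)

lemma orbit_closures_subset :
    {S : Set X | ∃ x : X, S = closure (horbit x)} ⊆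
      {V : Set X | V ⊆ G.vertexSet ∧ V.Nonempty} ∪
      Set.sUnion '' {L : Set (Set X) | L ⊆ G.edgeSet ∧ L.Nonempty} := by
  rintro S ⟨x, rfl⟩
  rcases orbit_closure_structure G x with ⟨V, h1, h2, h3⟩ | ⟨L, h1, h2, h3⟩
  · exact Or.inl (h3 ▸ ⟨h1, h2⟩)
  · exact Or.inr ⟨L, ⟨h1, h2⟩, h3.symm⟩

lemma orbit_closures_finite (G : GraphStruct X) :
    {S : Set X | ∃ x : X, S = closure (horbit x)}.Finite := by
  apply Set.Finite.subset ?_ (orbit_closures_subset G)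
  apply Set.Finite.union
  · exact ((vertexSet_finite G).finite_subsets).subset fun V hV => hV.1
  · exact (((edgeSet_finite G).finite_subsets).subset fun L hL => hL.1).image _

lemma edgeSet_ncard_le : G.edgeSet.ncard ≤ G.numEdges := by
  rw [GraphStruct.edgeSet, ← Set.image_univ]
  calc ((fun i => Set.range (G.edge i)) '' Set.univ).ncard
      ≤ (Set.univ : Set (Fin G.numEdges)).ncard := Set.ncard_image_le Set.finite_univ
    _ = G.numEdges := by rw [Set.ncard_univ, Nat.card_eq_fintype_card, Fintype.card_fin]

theorem orbit_closures_ncard_le :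
    {S : Set X | ∃ x : X, S = closure (horbit x)}.ncard ≤
      2 ^ G.vertexSet.ncard + 2 ^ G.numEdges - 2 := by
  have hAfin : {V : Set X | V ⊆ G.vertexSet ∧ V.Nonempty}.Finite :=
    ((vertexSet_finite G).finite_subsets).subset fun V hV => hV.1
  have hBfin : (Set.sUnion '' {L : Set (Set X) | L ⊆ G.edgeSet ∧ L.Nonempty}).Finite :=
    (((edgeSet_finite G).finite_subsets).subset fun L hL => hL.1).image _
  have hA : {V : Set X | V ⊆ G.vertexSet ∧ V.Nonempty}.ncard ≤ 2 ^ G.vertexSet.ncard - 1 :=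
    ncard_subsets_nonempty (vertexSet_finite G)
  have hB : (Set.sUnion '' {L : Set (Set X) | L ⊆ G.edgeSet ∧ L.Nonempty}).ncard ≤
      2 ^ G.numEdges - 1 := by
    calc (Set.sUnion '' {L : Set (Set X) | L ⊆ G.edgeSet ∧ L.Nonempty}).ncard
        ≤ {L : Set (Set X) | L ⊆ G.edgeSet ∧ L.Nonempty}.ncard :=
          Set.ncard_image_le (((edgeSet_finite G).finite_subsets).subset fun L hL => hL.1)
      _ ≤ 2 ^ G.edgeSet.ncard - 1 := ncard_subsets_nonempty (edgeSet_finite G)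
      _ ≤ 2 ^ G.numEdges - 1 := by
          have := Nat.pow_le_pow_right (by norm_num : 1 ≤ 2) (edgeSet_ncard_le G)
          omega
  have hle : {S : Set X | ∃ x : X, S = closure (horbit x)}.ncard ≤
      ({V : Set X | V ⊆ G.vertexSet ∧ V.Nonempty} ∪
        Set.sUnion '' {L : Set (Set X) | L ⊆ G.edgeSet ∧ L.Nonempty}).ncard :=
    Set.ncard_le_ncard (orbit_closures_subset G) (hAfin.union hBfin)
  have hun := Set.ncard_union_le {V : Set X | V ⊆ G.vertexSet ∧ V.Nonempty}
    (Set.sUnion '' {L : Set (Set X) | L ⊆ G.edgeSet ∧ L.Nonempty})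
  have h1 : 1 ≤ 2 ^ G.vertexSet.ncard := Nat.one_le_two_pow
  have h2 : 1 ≤ 2 ^ G.numEdges := Nat.one_le_two_pow
  omega

lemma orbitclosure_subset_invariant {Y : Set X} (hcl : IsClosed Y)
    (hinv : InvariantUnder (⊤ : Subgroup (X ≃ₜ X)) Y) {z : X} (hz : z ∈ Y) :
    closure (horbit z) ⊆ Y := by
  apply closure_minimal ?_ hcl
  rintro _ ⟨f, rfl⟩
  exact hinv f (by trivial) z hz

lemma chain_le (G : GraphStruct X) {n : ℕ} (hn : n ∈ heightSet (⊤ : Subgroup (X ≃ₜ X))) :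
    n + 1 ≤ {S : Set X | ∃ x : X, S = closure (horbit x)}.ncard := by
  obtain ⟨Y, hmono, hprop, hlast⟩ := hn
  set O := {S : Set X | ∃ x : X, S = closure (horbit x)} with hO
  have hOfin : O.Finite := orbit_closures_finite G
  set T : Fin (n+1) → Set (Set X) := fun k => {S ∈ O | S ⊆ Y k} with hT
  have hYk : ∀ k, Y k = ⋃₀ T k := by
    intro k
    obtain ⟨hne, hcl, hinv⟩ := hprop k
    apply subset_antisymm
    · intro z hz
      exact ⟨closure (horbit z), ⟨⟨z, rfl⟩,
        orbitclosure_subset_invariant hcl hinv hz⟩, subset_closure (mem_horbit_self z)⟩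
    · exact Set.sUnion_subset fun S hS => hS.2
  have hTmono : StrictMono T := by
    intro a b hab
    have hsub : T a ⊆ T b := fun S hS => ⟨hS.1, hS.2.trans (hmono hab).le⟩
    refine hsub.ssubset_of_ne ?_
    intro he
    exact (hmono hab).ne (by rw [hYk, hYk, he])
  have hfinT : ∀ k, (T k).Finite := fun k => hOfin.subset fun S hS => hS.1
  have hcard : ∀ k : Fin (n+1), (k : ℕ) + 1 ≤ (T k).ncard := by
    intro k
    induction k using Fin.induction with
    | zero =>
        have hne : (T 0).Nonempty := by
          obtain ⟨z, hz⟩ := (hprop 0).1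
          exact ⟨closure (horbit z), ⟨z, rfl⟩,
            orbitclosure_subset_invariant (hprop 0).2.1 (hprop 0).2.2 hz⟩
        have := (Set.ncard_pos (hfinT 0)).mpr hne
        exact this
    | succ k ih =>
        have hlt : (T k.castSucc).ncard < (T k.succ).ncard :=
          Set.ncard_lt_ncard (hTmono (Fin.castSucc_lt_succ (i := k))) (hfinT _)
        have hks : ((k.succ : Fin (n+1)) : ℕ) = (k : ℕ) + 1 := by simp
        have hkc : ((k.castSucc : Fin (n+1)) : ℕ) = (k : ℕ) := by simp
        omega
  have hlastcard := hcard (Fin.last n)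
  have : (T (Fin.last n)).ncard ≤ O.ncard :=
    Set.ncard_le_ncard (fun S hS => hS.1) hOfin
  simp only [Fin.val_last] at hlastcard
  omega

theorem height_top_le :
    height (⊤ : Subgroup (X ≃ₜ X)) ≤
      ((2 ^ G.vertexSet.ncard + 2 ^ G.numEdges - 3 : ℕ) : ℕ∞) := by
  apply sSup_le
  rintro a ⟨n, hn, rfl⟩
  have h1 := chain_le G hn
  have h2 := orbit_closures_ncard_le G
  have h3 : 1 ≤ 2 ^ G.vertexSet.ncard := Nat.one_le_two_pow
  have h4 : 1 ≤ 2 ^ G.numEdges := Nat.one_le_two_pow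
  exact_mod_cast Nat.cast_le.mpr (by omega : n ≤ 2 ^ G.vertexSet.ncard + 2 ^ G.numEdges - 3)

end GraphAux

end

/-- A topological graph has finite full-homeomorphism-group height; if it is not a circle
every orbit closure is a union of vertices or a union of closed edges, giving the bound
`h(Homeo(X), X) ≤ 2^{|V|} + 2^{|E|} − 3`. -/
theorem graph_full_homeo_height_finite (X : Type*) [MetricSpace X] [CompactSpace X]
    [ConnectedSpace X] (G : GraphStruct X) :
    height (⊤ : Subgroup (X ≃ₜ X)) ≠ ⊤ ∧
    (¬ Nonempty (X ≃ₜ Circle) →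
      (∀ x : X,
        (∃ V ⊆ G.vertexSet, V.Nonempty ∧
          closure {y | ∃ f : X ≃ₜ X, f x = y} = V) ∨
        (∃ L ⊆ G.edgeSet, L.Nonempty ∧
          closure {y | ∃ f : X ≃ₜ X, f x = y} = ⋃₀ L)) ∧
      {S : Set X | ∃ x : X, S = closure {y | ∃ f : X ≃ₜ X, f x = y}}.ncard ≤
        2 ^ G.vertexSet.ncard + 2 ^ G.numEdges - 2 ∧
      height (⊤ : Subgroup (X ≃ₜ X)) ≤
        ((2 ^ G.vertexSet.ncard + 2 ^ G.numEdges - 3 : ℕ) : ℕ∞)) := by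
  have hle := GraphAux.height_top_le G
  refine ⟨(lt_of_le_of_lt hle (WithTop.coe_lt_top _)).ne, fun _ => ⟨?_, ?_, hle⟩⟩
  · intro x
    exact GraphAux.orbit_closure_structure G x
  · exact GraphAux.orbit_closures_ncard_le G
end
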